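/- Let (X, Y) be bivariate normal with standard normal marginals and correlation ρ, with |ρ| ≤ ρ₀ < 1. Then for the absolute values, lim_{t→∞} P(|Y| > t | |X| > t) = 0; i.e., |X| and |Y| are quasi-asymptotically independent. -/

import Mathlib

open MeasureTheory ProbabilityTheory Filter Topology

open Real Set


lemma neg_exp_hasDeriv (x : ℝ) :
    HasDerivAt (fun y : ℝ => -rexp (-y^2/2)) (x * rexp (-x^2/2)) x := by
  have h1 : HasDerivAt (fun y : ℝ => -y^2/2) (-x) x := by
    have := ((hasDerivAt_pow 2 x).neg.div_const 2)
    refine this.congr_deriv ?_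
    · push_cast; ring
  have h2 := h1.exp.neg
  refine h2.congr_deriv ?_
  ring

lemma neg_exp_tendsto : Tendsto (fun y : ℝ => -rexp (-y^2/2)) atTop (𝓝 0) := by
  have h1 : Tendsto (fun y : ℝ => -y^2/2) atTop atBot := by
    have : Tendsto (fun y : ℝ => y * (y * (-1/2))) atTop atBot :=
      tendsto_id.atTop_mul_atBot₀ (tendsto_id.atTop_mul_const_of_neg (by norm_num))
    convert this using 2 with y
    ring
  have := (Real.tendsto_exp_atBot.comp h1).neg
  simpa using this

lemma exp_tail_integral {s : ℝ} (hs : 0 ≤ s) :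
    ∫ x in Set.Ioi s, x * rexp (-x^2/2) = rexp (-s^2/2) := by
  have := integral_Ioi_of_hasDerivAt_of_nonneg (g := fun y : ℝ => -rexp (-y^2/2))
    (g' := fun x => x * rexp (-x^2/2)) (a := s) (l := 0)
    (neg_exp_hasDeriv s).continuousAt.continuousWithinAt
    (fun x _ => neg_exp_hasDeriv x)
    (fun x hx => by
      have hx0 : (0:ℝ) ≤ x := le_trans hs (le_of_lt hx)
      positivity) neg_exp_tendsto
  simpa using this


lemma gauss_pdf_eq (x : ℝ) : gaussianPDFReal 0 1 x = (√(2*π))⁻¹ * rexp (-x^2/2) := by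
  simp [gaussianPDFReal]

lemma gauss_set_toReal (s : Set ℝ) :
    ((gaussianReal 0 1) s).toReal = ∫ x in s, gaussianPDFReal 0 1 x := by
  rw [gaussianReal_apply_eq_integral 0 one_ne_zero s,
    ENNReal.toReal_ofReal (integral_nonneg fun x => gaussianPDFReal_nonneg 0 1 x)]

lemma abs_set_eq (s : ℝ) : {x : ℝ | |x| > s} = Set.Iio (-s) ∪ Set.Ioi s := by
  ext x
  simp only [Set.mem_setOf_eq, Set.mem_union, Set.mem_Iio, Set.mem_Ioi, gt_iff_lt, lt_abs]
  constructor
  · rintro (h | h)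
    · right; exact h
    · left; linarith
  · rintro (h | h)
    · right; linarith
    · left; exact h

lemma exp_tail_integrableOn {s : ℝ} (hs : 0 ≤ s) :
    IntegrableOn (fun x : ℝ => x * rexp (-x^2/2)) (Set.Ioi s) := by
  exact integrableOn_Ioi_deriv_of_nonneg (g := fun y : ℝ => -rexp (-y^2/2)) (l := 0)
    (neg_exp_hasDeriv s).continuousAt.continuousWithinAt
    (fun x _ => neg_exp_hasDeriv x)
    (fun x hx => by
      have hx0 : (0:ℝ) ≤ x := le_trans hs (le_of_lt hx)
      positivity) neg_exp_tendsto

lemma gauss_Ioi_upper {s : ℝ} (hs : 1 ≤ s) :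
    ∫ x in Set.Ioi s, gaussianPDFReal 0 1 x ≤ (√(2*π))⁻¹ * rexp (-s^2/2) := by
  have hs0 : (0:ℝ) ≤ s := le_trans zero_le_one hs
  have key : ∫ x in Set.Ioi s, gaussianPDFReal 0 1 x
      ≤ ∫ x in Set.Ioi s, (√(2*π))⁻¹ * (x * rexp (-x^2/2)) := by
    apply setIntegral_mono_on
    · exact (integrable_gaussianPDFReal 0 1).integrableOn
    · exact (exp_tail_integrableOn hs0).const_mul _
    · exact measurableSet_Ioi
    · intro x hx
      rw [gauss_pdf_eq]
      have hx1 : (1:ℝ) ≤ x := le_trans hs (le_of_lt hx)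
      have hK : (0:ℝ) ≤ (√(2*π))⁻¹ := by positivity
      have he : (0:ℝ) < rexp (-x^2/2) := Real.exp_pos _
      have h1 : rexp (-x^2/2) ≤ x * rexp (-x^2/2) := le_mul_of_one_le_left he.le hx1
      exact mul_le_mul_of_nonneg_left h1 hK
  calc ∫ x in Set.Ioi s, gaussianPDFReal 0 1 x
      ≤ ∫ x in Set.Ioi s, (√(2*π))⁻¹ * (x * rexp (-x^2/2)) := key
    _ = (√(2*π))⁻¹ * ∫ x in Set.Ioi s, x * rexp (-x^2/2) := by
        rw [MeasureTheory.integral_const_mul]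
    _ = (√(2*π))⁻¹ * rexp (-s^2/2) := by rw [exp_tail_integral hs0]

lemma gauss_abs_upper {s : ℝ} (hs : 1 ≤ s) :
    ((gaussianReal 0 1) {x | |x| > s}).toReal ≤ 2 * (√(2*π))⁻¹ * rexp (-s^2/2) := by
  have hs0 : (0:ℝ) ≤ s := le_trans zero_le_one hs
  rw [gauss_set_toReal, abs_set_eq]
  rw [setIntegral_union (by
      apply Set.disjoint_left.mpr
      intro x hx1 hx2
      simp only [Set.mem_Iio, Set.mem_Ioi] at hx1 hx2
      linarith) measurableSet_Ioi
    (integrable_gaussianPDFReal 0 1).integrableOn (integrable_gaussianPDFReal 0 1).integrableOn]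
  have hsym : ∫ x in Set.Iio (-s), gaussianPDFReal 0 1 x = ∫ x in Set.Ioi s, gaussianPDFReal 0 1 x := by
    rw [← integral_Iic_eq_integral_Iio, ← integral_comp_neg_Ioi]
    congr 1
    ext x
    rw [gauss_pdf_eq, gauss_pdf_eq, neg_pow]
    norm_num
  rw [hsym]
  have := gauss_Ioi_upper hs
  linarith

lemma gauss_abs_lower {s : ℝ} (hs : 0 ≤ s) :
    (√(2*π))⁻¹ * rexp (-(s+1)^2/2) ≤ ((gaussianReal 0 1) {x | |x| > s}).toReal := by
  rw [gauss_set_toReal]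
  have hsub : ∫ x in Set.Ioc s (s+1), gaussianPDFReal 0 1 x
      ≤ ∫ x in {x : ℝ | |x| > s}, gaussianPDFReal 0 1 x := by
    apply setIntegral_mono_set
    · exact (integrable_gaussianPDFReal 0 1).integrableOn
    · exact Filter.Eventually.of_forall fun x => gaussianPDFReal_nonneg 0 1 x
    · apply HasSubset.Subset.eventuallyLE
      intro x hx
      simp only [Set.mem_Ioc] at hx
      simp only [Set.mem_setOf_eq, gt_iff_lt]
      rw [abs_of_pos (lt_of_le_of_lt hs hx.1)]
      exact hx.1
  have hconst : (√(2*π))⁻¹ * rexp (-(s+1)^2/2) ≤ ∫ x in Set.Ioc s (s+1), gaussianPDFReal 0 1 x := by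
    have h1 : ∫ x in Set.Ioc s (s+1), ((√(2*π))⁻¹ * rexp (-(s+1)^2/2)) =
        (√(2*π))⁻¹ * rexp (-(s+1)^2/2) := by
      rw [setIntegral_const]
      simp [Real.volume_Ioc]
    rw [← h1]
    apply setIntegral_mono_on
    · exact integrableOn_const (by simp [Real.volume_Ioc])
    · exact (integrable_gaussianPDFReal 0 1).integrableOn
    · exact measurableSet_Ioc
    · intro x hx
      simp only [Set.mem_Ioc] at hx
      rw [gauss_pdf_eq]
      have hK : (0:ℝ) ≤ (√(2*π))⁻¹ := by positivity
      have hxx : x^2 ≤ (s+1)^2 := by nlinarith [hx.1, hx.2, hs]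
      have : rexp (-(s+1)^2/2) ≤ rexp (-x^2/2) := Real.exp_le_exp.mpr (by linarith)
      nlinarith [Real.exp_pos (-(s+1)^2/2)]
  linarith

set_option maxHeartbeats 1000000 in
/-- For a bivariate normal pair `(X, Y)` with standard normal marginals and correlation
`ρ` with `|ρ| ≤ ρ₀ < 1`, the absolute values are quasi-asymptotically independent:
`P(|Y| > t | |X| > t) → 0` as `t → ∞`. -/
theorem abs_bivariate_normal_quasi_asymp_indep
    {Ω : Type*} [MeasurableSpace Ω] (μ : Measure Ω) [IsProbabilityMeasure μ]
    (ρ ρ₀ : ℝ) (hρ : |ρ| ≤ ρ₀) (hρ₀1 : ρ₀ < 1)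
    (X Z Y : Ω → ℝ)
    (hX : Measure.map X μ = gaussianReal 0 1)
    (hZ : Measure.map Z μ = gaussianReal 0 1)
    (hindep : IndepFun X Z μ)
    (hY : ∀ ω, Y ω = ρ * X ω + Real.sqrt (1 - ρ ^ 2) * Z ω) :
    Tendsto (fun t : ℝ =>
        (μ {ω | |X ω| > t ∧ |Y ω| > t}).toReal / (μ {ω | |X ω| > t}).toReal)
      atTop (𝓝 0) := by
  have hρ₀0 : 0 ≤ ρ₀ := le_trans (abs_nonneg ρ) hρ
  set M : ℝ := 2 / (1 + ρ₀) with hMdef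
  set c : ℝ := (1 - ρ₀) / (1 + ρ₀) with hcdef
  have hden : (0:ℝ) < 1 + ρ₀ := by linarith
  have hM1 : 1 < M := by rw [hMdef, lt_div_iff₀ hden]; linarith
  have hc : 0 < c := by exact div_pos (by linarith) hden
  have hMc : ∀ t : ℝ, c*t = t - ρ₀ * (M*t) := by
    intro t
    rw [hMdef, hcdef]
    field_simp
    ring
  clear_value M c
  clear hMdef hcdef
  have hXm : AEMeasurable X μ := aemeasurable_of_map_neZero (by rw [hX]; infer_instance)
  have hZm : AEMeasurable Z μ := aemeasurable_of_map_neZero (by rw [hZ]; infer_instance)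
  have ms : ∀ s : ℝ, MeasurableSet {x : ℝ | |x| > s} := fun s =>
    measurableSet_lt measurable_const continuous_abs.measurable
  have gmapX : ∀ s : ℝ, μ {ω | |X ω| > s} = (gaussianReal 0 1) {x | |x| > s} := by
    intro s
    rw [← hX, Measure.map_apply_of_aemeasurable hXm (ms s)]
    rfl
  have gmapZ : ∀ s : ℝ, μ {ω | |Z ω| > s} = (gaussianReal 0 1) {x | |x| > s} := by
    intro s
    rw [← hZ, Measure.map_apply_of_aemeasurable hZm (ms s)]
    rfl
  let g : ℝ → ℝ := fun s => ((gaussianReal 0 1) {x | |x| > s}).toReal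
  have hgX : ∀ s : ℝ, (μ {ω | |X ω| > s}).toReal = g s := fun s => by rw [gmapX s]
  -- set inclusion
  have hincl : ∀ t : ℝ, {ω | |X ω| > t ∧ |Y ω| > t} ⊆
      {ω | |X ω| > M*t} ∪ (X ⁻¹' {x | |x| > t} ∩ Z ⁻¹' {x | |x| > c*t}) := by
    intro t ω hω
    obtain ⟨hXt, hYt⟩ := hω
    by_cases hbig : |X ω| > M*t
    · exact Or.inl hbig
    · push_neg at hbig
      refine Or.inr ⟨hXt, ?_⟩
      have hsq1 : Real.sqrt (1 - ρ^2) ≤ 1 := Real.sqrt_le_one.mpr (by nlinarith [sq_nonneg ρ])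
      have h1 : Real.sqrt (1 - ρ^2) * |Z ω| = |Y ω - ρ * X ω| := by
        have h0 : Y ω - ρ * X ω = Real.sqrt (1 - ρ^2) * Z ω := by rw [hY ω]; ring
        rw [h0, abs_mul, abs_of_nonneg (Real.sqrt_nonneg _)]
      have h2 : |Y ω| - |ρ * X ω| ≤ |Y ω - ρ * X ω| := abs_sub_abs_le_abs_sub _ _
      have h3 : |ρ * X ω| ≤ ρ₀ * (M*t) := by
        rw [abs_mul]
        exact mul_le_mul hρ hbig (abs_nonneg _) hρ₀0
      have h4 : c*t = t - ρ₀ * (M*t) := hMc t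
      have h5 : Real.sqrt (1 - ρ^2) * |Z ω| ≤ |Z ω| := by
        calc Real.sqrt (1 - ρ^2) * |Z ω| ≤ 1 * |Z ω| :=
              mul_le_mul_of_nonneg_right hsq1 (abs_nonneg _)
          _ = |Z ω| := one_mul _
      show |Z ω| > c * t
      linarith [h1 ▸ h2]
  -- measure bound
  have hbound : ∀ t : ℝ, (μ {ω | |X ω| > t ∧ |Y ω| > t}).toReal ≤ g (M*t) + g t * g (c*t) := by
    intro t
    have hEN : μ {ω | |X ω| > t ∧ |Y ω| > t} ≤
        (gaussianReal 0 1) {x | |x| > M*t} +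
          (gaussianReal 0 1) {x | |x| > t} * (gaussianReal 0 1) {x | |x| > c*t} := by
      calc μ {ω | |X ω| > t ∧ |Y ω| > t}
          ≤ μ ({ω | |X ω| > M*t} ∪ (X ⁻¹' {x | |x| > t} ∩ Z ⁻¹' {x | |x| > c*t})) :=
            measure_mono (hincl t)
        _ ≤ μ {ω | |X ω| > M*t} + μ (X ⁻¹' {x | |x| > t} ∩ Z ⁻¹' {x | |x| > c*t}) :=
            measure_union_le _ _
        _ = (gaussianReal 0 1) {x | |x| > M*t} +
              (gaussianReal 0 1) {x | |x| > t} * (gaussianReal 0 1) {x | |x| > c*t} := by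
            rw [hindep.measure_inter_preimage_eq_mul _ _ (ms t) (ms (c*t))]
            rw [gmapX (M*t)]
            rw [show X ⁻¹' {x | |x| > t} = {ω | |X ω| > t} from rfl,
              show Z ⁻¹' {x | |x| > c*t} = {ω | |Z ω| > c*t} from rfl, gmapX t, gmapZ (c*t)]
    have hfin1 : (gaussianReal 0 1) {x | |x| > M*t} ≠ ⊤ := measure_ne_top _ _
    have hfin2 : (gaussianReal 0 1) {x | |x| > t} * (gaussianReal 0 1) {x | |x| > c*t} ≠ ⊤ :=
      ENNReal.mul_ne_top (measure_ne_top _ _) (measure_ne_top _ _)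
    calc (μ {ω | |X ω| > t ∧ |Y ω| > t}).toReal
        ≤ ((gaussianReal 0 1) {x | |x| > M*t} +
            (gaussianReal 0 1) {x | |x| > t} * (gaussianReal 0 1) {x | |x| > c*t}).toReal :=
          ENNReal.toReal_mono (by finiteness) hEN
      _ = g (M*t) + g t * g (c*t) := by
          rw [ENNReal.toReal_add hfin1 hfin2, ENNReal.toReal_mul]
  set K : ℝ := (√(2*π))⁻¹ with hKdef
  have hK : 0 < K := by rw [hKdef]; positivity
  have hupper : ∀ {s : ℝ}, 1 ≤ s → g s ≤ 2 * K * rexp (-s^2/2) := fun hs => gauss_abs_upper hs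
  have hlower : ∀ {s : ℝ}, 0 ≤ s → K * rexp (-(s+1)^2/2) ≤ g s := fun hs => gauss_abs_lower hs
  set h : ℝ → ℝ :=
    fun t => 2 * rexp (((t+1)^2 - (M*t)^2)/2) + 2*K * rexp (-(c*t)^2/2) with hhdef
  have hev : ∀ᶠ t in atTop, (μ {ω | |X ω| > t ∧ |Y ω| > t}).toReal /
      (μ {ω | |X ω| > t}).toReal ≤ h t := by
    filter_upwards [eventually_ge_atTop (1:ℝ), eventually_ge_atTop (1/c)] with t ht1 htc
    have ht0 : (0:ℝ) ≤ t := le_trans zero_le_one ht1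
    have hMt : 1 ≤ M*t := by nlinarith
    have hct : 1 ≤ c*t := by
      have := (div_le_iff₀ hc).mp htc
      linarith
    have hgt : 0 < g t := lt_of_lt_of_le (by positivity) (hlower ht0)
    have hgMt : 0 ≤ g (M*t) := ENNReal.toReal_nonneg
    have hgct0 : 0 ≤ g (c*t) := ENNReal.toReal_nonneg
    rw [hgX t]
    have halg : (2*K*rexp (-(M*t)^2/2)) / (K * rexp (-(t+1)^2/2))
        = 2 * rexp (((t+1)^2 - (M*t)^2)/2) := by
      rw [show ((t+1)^2 - (M*t)^2)/2 = (-(M*t)^2/2) - (-(t+1)^2/2) by ring, Real.exp_sub]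
      field_simp
    calc (μ {ω | |X ω| > t ∧ |Y ω| > t}).toReal / g t
        ≤ (g (M*t) + g t * g (c*t)) / g t := by
          apply div_le_div_of_nonneg_right (hbound t) hgt.le
      _ = g (M*t) / g t + g (c*t) := by
          rw [add_div, mul_comm (g t) (g (c*t)), mul_div_assoc, div_self (ne_of_gt hgt),
            mul_one]
      _ ≤ (2*K*rexp (-(M*t)^2/2)) / (K * rexp (-(t+1)^2/2)) + 2*K * rexp (-(c*t)^2/2) := by
          apply add_le_add
          · apply div_le_div₀ (by positivity) (hupper hMt) (by positivity) (hlower ht0)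
          · exact hupper hct
      _ = h t := by rw [halg]
  have hh1 : Tendsto (fun t : ℝ => ((t+1)^2 - (M*t)^2)/2) atTop atBot := by
    have hlin : Tendsto (fun t : ℝ => t * ((1 - M^2)/2) + 1) atTop atBot :=
      tendsto_atBot_add_const_right _ 1 (tendsto_id.atTop_mul_const_of_neg (show (1 - M^2)/2 < 0 from div_neg_of_neg_of_pos (by nlinarith) two_pos))
    have h2 := tendsto_atBot_add_const_right _ (1/2 : ℝ) (tendsto_id.atTop_mul_atBot₀ hlin)
    exact h2.congr fun t => by simp only [id_eq]; ring
  have hh1' : Tendsto (fun t : ℝ => 2 * rexp (((t+1)^2 - (M*t)^2)/2)) atTop (𝓝 0) := by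
    have := (Real.tendsto_exp_atBot.comp hh1).const_mul (2:ℝ)
    simpa using this
  have hh2 : Tendsto (fun t : ℝ => -(c*t)^2/2) atTop atBot := by
    have h2 := tendsto_id.atTop_mul_atBot₀
      (tendsto_id.atTop_mul_const_of_neg (show -(c^2)/2 < 0 from div_neg_of_neg_of_pos (neg_lt_zero.mpr (pow_pos hc 2)) two_pos))
    exact h2.congr fun t => by simp only [id_eq]; ring
  have hh2' : Tendsto (fun t : ℝ => 2*K * rexp (-(c*t)^2/2)) atTop (𝓝 0) := by
    have := (Real.tendsto_exp_atBot.comp hh2).const_mul (2*K)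
    simpa using this
  have hhlim : Tendsto h atTop (𝓝 0) := by
    have := hh1'.add hh2'
    simpa using this
  exact squeeze_zero' (Eventually.of_forall fun t =>
    div_nonneg ENNReal.toReal_nonneg ENNReal.toReal_nonneg) hev hhlim
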